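/- The Banach space B(ℓ₂) of bounded linear operators on the complex Hilbert space ℓ₂ = ℓ₂(ℕ, ℂ), equipped with the operator norm, is isomorphic (via a continuous linear equivalence) to the Banach space ℓ∞(B(ℓ₂)) of bounded B(ℓ₂)-valued sequences with the supremum norm. -/

import Mathlib

set_option synthInstance.maxHeartbeats 1000000
set_option maxHeartbeats 1000000
open scoped ENNReal

/-- The complex Hilbert space `ℓ₂ = ℓ₂(ℕ, ℂ)`. -/
noncomputable abbrev EllTwo : Type := lp (fun _ : ℕ => ℂ) 2

/-- `B(ℓ₂)`, the Banach space of bounded linear operators on `ℓ₂`, with the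
operator norm. -/
noncomputable abbrev BoundedOpsOnEllTwo : Type := EllTwo →L[ℂ] EllTwo

section LpInfty

variable {ι κ : Type*} {B : Type*} [NormedAddCommGroup B] [NormedSpace ℂ B]

/-- Pullback along an index map, as a continuous linear map on `ℓ∞`. -/
noncomputable def lpInftyComp (g : κ → ι) :
    lp (fun _ : ι => B) ∞ →L[ℂ] lp (fun _ : κ => B) ∞ :=
  LinearMap.mkContinuous
    { toFun := fun f => ⟨fun k => f (g k), memℓp_infty ⟨‖f‖, by
        rintro x ⟨k, rfl⟩
        exact lp.norm_apply_le_norm (by norm_num) f (g k)⟩⟩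
      map_add' := fun f f' => by
        apply lp.ext; funext k; simp [lp.coeFn_add]; rfl
      map_smul' := fun c f => by
        apply lp.ext; funext k; simp [lp.coeFn_smul] }
    1 (fun f => by
      rw [one_mul]
      apply lp.norm_le_of_forall_le (norm_nonneg f)
      intro k
      exact lp.norm_apply_le_norm (by norm_num) f (g k))

@[simp] lemma lpInftyComp_apply (g : κ → ι) (f : lp (fun _ : ι => B) ∞) (k : κ) :
    (lpInftyComp g f : ∀ _ : κ, B) k = f (g k) := rfl

/-- Reindexing `ℓ∞` along an equivalence of index types. -/
noncomputable def lpInftyCongr (e : ι ≃ κ) :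
    lp (fun _ : ι => B) ∞ ≃L[ℂ] lp (fun _ : κ => B) ∞ :=
  ContinuousLinearEquiv.equivOfInverse (lpInftyComp e.symm) (lpInftyComp e)
    (fun f => by apply lp.ext; funext i; simp)
    (fun f => by apply lp.ext; funext k; simp)

/-- `ℓ∞` over a sum of index types splits as a product. -/
noncomputable def lpInftySumSplit :
    lp (fun _ : ι ⊕ κ => B) ∞ ≃L[ℂ] lp (fun _ : ι => B) ∞ × lp (fun _ : κ => B) ∞ :=
  ContinuousLinearEquiv.equivOfInverse
    ((lpInftyComp Sum.inl).prod (lpInftyComp Sum.inr))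
    (LinearMap.mkContinuous
      { toFun := fun f => ⟨Sum.elim ⇑f.1 ⇑f.2, memℓp_infty ⟨max ‖f.1‖ ‖f.2‖, by
          rintro x ⟨s, rfl⟩
          rcases s with i | k
          · exact le_max_of_le_left (lp.norm_apply_le_norm (by norm_num) f.1 i)
          · exact le_max_of_le_right (lp.norm_apply_le_norm (by norm_num) f.2 k)⟩⟩
        map_add' := fun f f' => by
          apply lp.ext; funext s; rcases s with i | k <;> simp [lp.coeFn_add] <;> rfl
        map_smul' := fun c f => by
          apply lp.ext; funext s; rcases s with i | k <;> simp [lp.coeFn_smul] }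
      1 (fun f => by
        rw [one_mul]
        apply lp.norm_le_of_forall_le (norm_nonneg f)
        rintro (i | k)
        · exact le_trans (lp.norm_apply_le_norm (by norm_num) f.1 i)
            (le_trans (le_max_left _ _) (le_of_eq (Prod.norm_def f).symm))
        · exact le_trans (lp.norm_apply_le_norm (by norm_num) f.2 k)
            (le_trans (le_max_right _ _) (le_of_eq (Prod.norm_def f).symm))))
    (fun f => by apply lp.ext; funext s; rcases s with i | k <;> rfl)
    (fun f => by
      refine Prod.ext ?_ ?_ <;> apply lp.ext <;> funext x <;> rfl)

/-- `ℓ∞` over `PUnit` is just `B`. -/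
noncomputable def lpInftyPUnit : lp (fun _ : Unit => B) ∞ ≃L[ℂ] B :=
  ContinuousLinearEquiv.equivOfInverse
    (LinearMap.mkContinuous
      { toFun := fun f => f Unit.unit
        map_add' := fun f f' => by simp [lp.coeFn_add]
        map_smul' := fun c f => by simp [lp.coeFn_smul] }
      1 (fun f => by
        rw [one_mul]; exact lp.norm_apply_le_norm (by norm_num) f Unit.unit))
    (LinearMap.mkContinuous
      { toFun := fun b => ⟨fun _ => b, memℓp_infty ⟨‖b‖, by rintro x ⟨u, rfl⟩; exact le_rfl⟩⟩
        map_add' := fun b b' => by apply lp.ext; funext u; rfl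
        map_smul' := fun c b => by apply lp.ext; funext u; rfl }
      1 (fun b => by
        rw [one_mul]
        apply lp.norm_le_of_forall_le (norm_nonneg b)
        intro u; exact le_rfl))
    (fun f => by apply lp.ext; funext u; rfl)
    (fun b => rfl)

end LpInfty

section Retract

variable {X Y : Type*} [NormedAddCommGroup X] [NormedSpace ℂ X]
  [NormedAddCommGroup Y] [NormedSpace ℂ Y]

/-- If `Y` is a retract of `X` (via continuous linear maps), then
`X ≃ Y × ker E`. -/
noncomputable def retractEquivProdKer (S : Y →L[ℂ] X) (E : X →L[ℂ] Y)
    (hES : ∀ y, E (S y) = y) :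
    X ≃L[ℂ] Y × (LinearMap.ker (E : X →ₗ[ℂ] Y)) where
  toLinearEquiv :=
    { toFun := fun x => (E x, ⟨x - S (E x), by
        simp [LinearMap.mem_ker, map_sub, hES]⟩)
      invFun := fun p => S p.1 + p.2.1
      left_inv := fun x => by simp
      right_inv := fun p => by
        have h0 : E p.2.1 = 0 := p.2.2
        ext
        · simp [h0, hES]
        · simp [h0, hES]
      map_add' := fun x y => by
        ext <;> simp <;> abel
      map_smul' := fun c x => by
        ext <;> simp [smul_sub]
    }
  continuous_toFun := by
    refine Continuous.prodMk E.continuous ?_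
    exact Continuous.subtype_mk (continuous_id.sub ((S.comp E).continuous)) _
  continuous_invFun := by
    exact ((S.continuous.comp continuous_fst).add
      (continuous_subtype_val.comp continuous_snd))

end Retract

section LpTwo

variable {ι κ : Type*}

/-- Reindexing `ℓ²` along an equivalence of index types, as a linear isometry
equivalence. -/
noncomputable def lpTwoCongr (e : ι ≃ κ) :
    lp (fun _ : ι => ℂ) 2 ≃ₗᵢ[ℂ] lp (fun _ : κ => ℂ) 2 where
  toLinearEquiv :=
    { toFun := fun f => ⟨fun k => f (e.symm k), by
        apply memℓp_gen
        exact e.symm.summable_iff.mpr ((lp.memℓp f).summable (by norm_num))⟩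
      invFun := fun g => ⟨fun i => g (e i), by
        apply memℓp_gen
        exact e.summable_iff.mpr ((lp.memℓp g).summable (by norm_num))⟩
      left_inv := fun f => by apply lp.ext; funext i; simp
      right_inv := fun g => by apply lp.ext; funext k; simp
      map_add' := fun f f' => by apply lp.ext; funext k; simp [lp.coeFn_add]; rfl
      map_smul' := fun c f => by apply lp.ext; funext k; simp [lp.coeFn_smul] }
  norm_map' := fun f => by
    have hp : (0:ℝ) < (2 : ℝ≥0∞).toReal := by norm_num
    rw [lp.norm_eq_tsum_rpow hp, lp.norm_eq_tsum_rpow hp]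
    congr 1
    exact e.symm.tsum_eq (fun i => ‖f i‖ ^ (2 : ℝ≥0∞).toReal)

noncomputable abbrev Htwo : Type := lp (fun _ : ℕ × ℕ => ℂ) 2

/-- Extraction of the `n`-th row. -/
noncomputable def extCLM (n : ℕ) : Htwo →L[ℂ] lp (fun _ : ℕ => ℂ) 2 :=
  LinearMap.mkContinuous
    { toFun := fun x => ⟨fun k => x (n, k), by
        apply memℓp_gen' (C := ‖x‖ ^ (2 : ℝ≥0∞).toReal)
        intro s
        calc ∑ k ∈ s, ‖x (n, k)‖ ^ (2 : ℝ≥0∞).toReal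
            = ∑ p ∈ s.map ⟨Prod.mk n, fun a b h => by simpa using h⟩,
                ‖x p‖ ^ (2 : ℝ≥0∞).toReal := by rw [Finset.sum_map]; simp; rfl
          _ ≤ _ := lp.sum_rpow_le_norm_rpow (by norm_num) x _⟩
      map_add' := fun x y => by apply lp.ext; funext k; simp [lp.coeFn_add]; rfl
      map_smul' := fun c x => by apply lp.ext; funext k; simp [lp.coeFn_smul] }
    1 (fun x => by
      rw [one_mul]
      apply lp.norm_le_of_forall_sum_le (by norm_num) (norm_nonneg x)
      intro s
      calc ∑ k ∈ s, ‖x (n, k)‖ ^ (2 : ℝ≥0∞).toReal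
          = ∑ p ∈ s.map ⟨Prod.mk n, fun a b h => by simpa using h⟩,
              ‖x p‖ ^ (2 : ℝ≥0∞).toReal := by rw [Finset.sum_map]; simp; rfl
        _ ≤ _ := lp.sum_rpow_le_norm_rpow (by norm_num) x _)

@[simp] lemma extCLM_apply (n : ℕ) (x : Htwo) (k : ℕ) :
    (extCLM n x : ∀ _ : ℕ, ℂ) k = x (n, k) := rfl

lemma emb_sum_bound (n : ℕ) (y : lp (fun _ : ℕ => ℂ) 2) (s : Finset (ℕ × ℕ)) :
    ∑ p ∈ s, ‖if p.1 = n then y p.2 else 0‖ ^ (2 : ℝ≥0∞).toReal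
      ≤ ‖y‖ ^ (2 : ℝ≥0∞).toReal := by
  classical
  have h1 : ∑ p ∈ s, ‖if p.1 = n then y p.2 else 0‖ ^ (2 : ℝ≥0∞).toReal
      = ∑ p ∈ s.filter (fun p => p.1 = n), ‖if p.1 = n then y p.2 else (0:ℂ)‖ ^ (2 : ℝ≥0∞).toReal := by
    refine (Finset.sum_filter_of_ne ?_).symm
    intro p _ hp
    by_contra hc
    apply hp
    rw [if_neg hc]
    norm_num
  rw [h1]
  have h2 : ∑ p ∈ s.filter (fun p => p.1 = n),
        ‖if p.1 = n then y p.2 else (0:ℂ)‖ ^ (2 : ℝ≥0∞).toReal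
      ≤ ∑ p ∈ (s.image Prod.snd).map ⟨Prod.mk n, fun a b h => by simpa using h⟩,
        ‖if p.1 = n then y p.2 else (0:ℂ)‖ ^ (2 : ℝ≥0∞).toReal := by
    apply Finset.sum_le_sum_of_subset_of_nonneg
    · intro p hp
      rw [Finset.mem_filter] at hp
      rw [Finset.mem_map]
      exact ⟨p.2, Finset.mem_image_of_mem _ hp.1, by
        show (n, p.2) = p
        rw [← hp.2]⟩
    · intro p _ _
      positivity
  refine le_trans h2 ?_
  rw [Finset.sum_map]
  calc ∑ k ∈ s.image Prod.snd, ‖if ((n, k) : ℕ × ℕ).1 = n then y k else (0:ℂ)‖ ^ (2 : ℝ≥0∞).toReal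
      = ∑ k ∈ s.image Prod.snd, ‖y k‖ ^ (2 : ℝ≥0∞).toReal := by
        apply Finset.sum_congr rfl; intro k _; rw [if_pos rfl]
    _ ≤ _ := lp.sum_rpow_le_norm_rpow (by norm_num) y _

/-- Embedding into the `n`-th row. -/
noncomputable def embCLM (n : ℕ) : lp (fun _ : ℕ => ℂ) 2 →L[ℂ] Htwo :=
  LinearMap.mkContinuous
    { toFun := fun y => ⟨fun p => if p.1 = n then y p.2 else 0,
        memℓp_gen' (emb_sum_bound n y)⟩
      map_add' := fun y y' => by
        apply lp.ext; funext p
        change (if p.1 = n then (y + y') p.2 else 0)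
          = (if p.1 = n then y p.2 else 0) + (if p.1 = n then y' p.2 else 0)
        by_cases h : p.1 = n <;> simp [h, lp.coeFn_add]
      map_smul' := fun c y => by
        apply lp.ext; funext p
        change (if p.1 = n then (c • y) p.2 else 0)
          = c • (if p.1 = n then y p.2 else 0)
        by_cases h : p.1 = n <;> simp [h, lp.coeFn_smul] }
    1 (fun y => by
      rw [one_mul]
      exact lp.norm_le_of_forall_sum_le (by norm_num) (norm_nonneg y)
        (emb_sum_bound n y))

@[simp] lemma embCLM_apply (n : ℕ) (y : lp (fun _ : ℕ => ℂ) 2) (p : ℕ × ℕ) :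
    (embCLM n y : ∀ _ : ℕ × ℕ, ℂ) p = if p.1 = n then y p.2 else 0 := rfl

lemma ext_emb (n : ℕ) (y : lp (fun _ : ℕ => ℂ) 2) : extCLM n (embCLM n y) = y := by
  apply lp.ext; funext k; simp

lemma extCLM_norm_le (n : ℕ) : ‖extCLM n‖ ≤ 1 :=
  LinearMap.mkContinuous_norm_le _ zero_le_one _

lemma embCLM_norm_le (n : ℕ) : ‖embCLM n‖ ≤ 1 :=
  LinearMap.mkContinuous_norm_le _ zero_le_one _

end LpTwo

section BlockDiag

noncomputable abbrev Wop : Type := BoundedOpsOnEllTwo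

lemma blockDiag_bounds (Tvec : lp (fun _ : ℕ => Wop) ∞) (x : Htwo) :
    Summable (fun p : ℕ × ℕ => ‖(Tvec p.1 (extCLM p.1 x)) p.2‖ ^ (2 : ℝ≥0∞).toReal) ∧
    ∑' p : ℕ × ℕ, ‖(Tvec p.1 (extCLM p.1 x)) p.2‖ ^ (2 : ℝ≥0∞).toReal
      ≤ (‖Tvec‖ * ‖x‖) ^ (2 : ℝ≥0∞).toReal := by
  have hp : (0:ℝ) < (2 : ℝ≥0∞).toReal := by norm_num
  set t : ℝ := (2 : ℝ≥0∞).toReal with ht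
  set M : ℝ := ‖Tvec‖ with hM
  have hM0 : 0 ≤ M := norm_nonneg _
  -- summability of the full family of x
  have hx : Summable fun p : ℕ × ℕ => ‖x p‖ ^ t := (lp.memℓp x).summable hp
  have hx0 : ∀ p : ℕ × ℕ, (0:ℝ) ≤ ‖x p‖ ^ t := fun p => Real.rpow_nonneg (norm_nonneg _) _
  obtain ⟨hxrow, hxcol⟩ := (summable_prod_of_nonneg hx0).mp hx
  -- rows of x
  have hrow_eq : ∀ n : ℕ, ‖extCLM n x‖ ^ t = ∑' k : ℕ, ‖x (n, k)‖ ^ t := by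
    intro n
    rw [lp.norm_rpow_eq_tsum hp]
    rfl
  have hrow_sum : Summable fun n : ℕ => ‖extCLM n x‖ ^ t := by
    simpa only [hrow_eq] using hxcol
  have hrow_tsum : ∑' n : ℕ, ‖extCLM n x‖ ^ t = ‖x‖ ^ t := by
    rw [lp.norm_rpow_eq_tsum hp x, Summable.tsum_prod' hx hxrow]
    exact tsum_congr fun n => hrow_eq n
  -- the image rows
  set z : ℕ → lp (fun _ : ℕ => ℂ) 2 := fun n => Tvec n (extCLM n x) with hz
  have hznorm : ∀ n, ‖z n‖ ^ t ≤ M ^ t * ‖extCLM n x‖ ^ t := by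
    intro n
    have h1 : ‖z n‖ ≤ M * ‖extCLM n x‖ := by
      refine le_trans (ContinuousLinearMap.le_opNorm _ _) ?_
      exact mul_le_mul_of_nonneg_right (lp.norm_apply_le_norm (by norm_num) Tvec n)
        (norm_nonneg _)
    calc ‖z n‖ ^ t ≤ (M * ‖extCLM n x‖) ^ t :=
          Real.rpow_le_rpow (norm_nonneg _) h1 (le_of_lt hp)
      _ = M ^ t * ‖extCLM n x‖ ^ t := Real.mul_rpow hM0 (norm_nonneg _)
  have hzrow : ∀ n : ℕ, Summable fun k : ℕ => ‖(z n) k‖ ^ t :=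
    fun n => (lp.memℓp (z n)).summable hp
  have hzrow_tsum : ∀ n : ℕ, ∑' k : ℕ, ‖(z n) k‖ ^ t = ‖z n‖ ^ t :=
    fun n => (lp.norm_rpow_eq_tsum hp (z n)).symm
  have hzsum : Summable fun n : ℕ => ‖z n‖ ^ t := by
    refine Summable.of_nonneg_of_le (fun n => Real.rpow_nonneg (norm_nonneg _) _)
      hznorm (hrow_sum.mul_left (M ^ t))
  have hcolsum : Summable fun n : ℕ => ∑' k : ℕ, ‖(z n) k‖ ^ t := by
    simpa only [hzrow_tsum] using hzsum
  have hF : Summable fun p : ℕ × ℕ => ‖(z p.1) p.2‖ ^ t := by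
    refine (summable_prod_of_nonneg ?_).mpr ⟨fun n => hzrow n, hcolsum⟩
    intro p; exact Real.rpow_nonneg (norm_nonneg _) _
  refine ⟨hF, ?_⟩
  calc ∑' p : ℕ × ℕ, ‖(z p.1) p.2‖ ^ t
      = ∑' n : ℕ, ∑' k : ℕ, ‖(z n) k‖ ^ t := Summable.tsum_prod' hF fun n => hzrow n
    _ = ∑' n : ℕ, ‖z n‖ ^ t := tsum_congr hzrow_tsum
    _ ≤ ∑' n : ℕ, M ^ t * ‖extCLM n x‖ ^ t :=
        Summable.tsum_le_tsum hznorm hzsum (hrow_sum.mul_left (M ^ t))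
    _ = M ^ t * ∑' n : ℕ, ‖extCLM n x‖ ^ t := tsum_mul_left
    _ = M ^ t * ‖x‖ ^ t := by rw [hrow_tsum]
    _ = (M * ‖x‖) ^ t := (Real.mul_rpow hM0 (norm_nonneg _)).symm

/-- The block diagonal operator on `ℓ²(ℕ × ℕ)` associated to a bounded
sequence of operators on `ℓ²(ℕ)`. -/
noncomputable def blockDiagMap (Tvec : lp (fun _ : ℕ => Wop) ∞) : Htwo →L[ℂ] Htwo :=
  LinearMap.mkContinuous
    { toFun := fun x => ⟨fun p : ℕ × ℕ => (Tvec p.1 (extCLM p.1 x)) p.2,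
        memℓp_gen (blockDiag_bounds Tvec x).1⟩
      map_add' := fun x y => by
        apply lp.ext; funext p
        change (Tvec p.1 (extCLM p.1 (x + y))) p.2
          = (Tvec p.1 (extCLM p.1 x)) p.2 + (Tvec p.1 (extCLM p.1 y)) p.2
        rw [map_add, map_add, lp.coeFn_add]
        rfl
      map_smul' := fun c x => by
        apply lp.ext; funext p
        change (Tvec p.1 (extCLM p.1 (c • x))) p.2 = c • (Tvec p.1 (extCLM p.1 x)) p.2
        rw [map_smul, map_smul, lp.coeFn_smul]
        rfl }
    ‖Tvec‖ (fun x => by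
      exact lp.norm_le_of_tsum_le (by norm_num)
        (mul_nonneg (norm_nonneg _) (norm_nonneg _)) (blockDiag_bounds Tvec x).2)

@[simp] lemma blockDiagMap_apply (Tvec : lp (fun _ : ℕ => Wop) ∞) (x : Htwo) (p : ℕ × ℕ) :
    (blockDiagMap Tvec x : ∀ _ : ℕ × ℕ, ℂ) p = (Tvec p.1 (extCLM p.1 x)) p.2 := rfl

lemma blockDiagMap_norm_le (Tvec : lp (fun _ : ℕ => Wop) ∞) :
    ‖blockDiagMap Tvec‖ ≤ ‖Tvec‖ :=
  LinearMap.mkContinuous_norm_le _ (norm_nonneg _) _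

/-- The block diagonal embedding `ℓ∞(B(ℓ₂)) → B(ℓ²(ℕ×ℕ))`. -/
noncomputable def SZero : lp (fun _ : ℕ => Wop) ∞ →L[ℂ] (Htwo →L[ℂ] Htwo) :=
  LinearMap.mkContinuous
    { toFun := blockDiagMap
      map_add' := fun Tvec Tvec' => by
        apply ContinuousLinearMap.ext; intro x
        apply lp.ext; funext p
        change ((Tvec + Tvec') p.1 (extCLM p.1 x)) p.2
          = (Tvec p.1 (extCLM p.1 x)) p.2 + (Tvec' p.1 (extCLM p.1 x)) p.2
        rw [lp.coeFn_add]
        rfl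
      map_smul' := fun c Tvec => by
        apply ContinuousLinearMap.ext; intro x
        apply lp.ext; funext p
        change ((c • Tvec) p.1 (extCLM p.1 x)) p.2 = c • (Tvec p.1 (extCLM p.1 x)) p.2
        rw [lp.coeFn_smul]
        rfl }
    1 (fun Tvec => by rw [one_mul]; exact blockDiagMap_norm_le Tvec)

/-- The compression map `B(ℓ²(ℕ×ℕ)) → ℓ∞(B(ℓ₂))`. -/
noncomputable def EZero : (Htwo →L[ℂ] Htwo) →L[ℂ] lp (fun _ : ℕ => Wop) ∞ :=
  LinearMap.mkContinuous
    { toFun := fun T => ⟨fun n => (extCLM n).comp (T.comp (embCLM n)), memℓp_infty ⟨‖T‖, by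
        rintro r ⟨n, rfl⟩
        calc ‖(extCLM n).comp (T.comp (embCLM n))‖
            ≤ ‖extCLM n‖ * ‖T.comp (embCLM n)‖ := ContinuousLinearMap.opNorm_comp_le _ _
          _ ≤ ‖extCLM n‖ * (‖T‖ * ‖embCLM n‖) := by
              refine mul_le_mul_of_nonneg_left (ContinuousLinearMap.opNorm_comp_le _ _)
                (norm_nonneg _)
          _ ≤ 1 * (‖T‖ * 1) := by
              refine mul_le_mul (extCLM_norm_le n) ?_ (mul_nonneg (norm_nonneg _) (norm_nonneg _)) zero_le_one
              exact mul_le_mul_of_nonneg_left (embCLM_norm_le n) (norm_nonneg _)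
          _ = ‖T‖ := by ring⟩⟩
      map_add' := fun T T' => by
        apply lp.ext; funext n
        change (extCLM n).comp ((T + T').comp (embCLM n))
          = (extCLM n).comp (T.comp (embCLM n)) + (extCLM n).comp (T'.comp (embCLM n))
        rw [ContinuousLinearMap.add_comp, ContinuousLinearMap.comp_add]
      map_smul' := fun c T => by
        apply lp.ext; funext n
        change (extCLM n).comp ((c • T).comp (embCLM n))
          = c • ((extCLM n).comp (T.comp (embCLM n)))
        rw [ContinuousLinearMap.smul_comp, ContinuousLinearMap.comp_smul] }
    1 (fun T => by
      rw [one_mul]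
      apply lp.norm_le_of_forall_le (norm_nonneg T)
      intro n
      calc ‖(extCLM n).comp (T.comp (embCLM n))‖
          ≤ ‖extCLM n‖ * ‖T.comp (embCLM n)‖ := ContinuousLinearMap.opNorm_comp_le _ _
        _ ≤ ‖extCLM n‖ * (‖T‖ * ‖embCLM n‖) := by
            refine mul_le_mul_of_nonneg_left (ContinuousLinearMap.opNorm_comp_le _ _)
              (norm_nonneg _)
        _ ≤ 1 * (‖T‖ * 1) := by
            refine mul_le_mul (extCLM_norm_le n) ?_ (mul_nonneg (norm_nonneg _) (norm_nonneg _)) zero_le_one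
            exact mul_le_mul_of_nonneg_left (embCLM_norm_le n) (norm_nonneg _)
        _ = ‖T‖ := by ring)

lemma EZero_SZero (Tvec : lp (fun _ : ℕ => Wop) ∞) : EZero (SZero Tvec) = Tvec := by
  apply lp.ext; funext n
  change (extCLM n).comp ((blockDiagMap Tvec).comp (embCLM n)) = Tvec n
  apply ContinuousLinearMap.ext; intro y
  apply lp.ext; funext k
  change (Tvec n (extCLM n (embCLM n y))) k = (Tvec n y) k
  rw [ext_emb]

end BlockDiag

section Assembly

noncomputable def tPUnitSymm : BoundedOpsOnEllTwo ≃L[ℂ] lp (fun _ : Unit => BoundedOpsOnEllTwo) ∞ :=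
  (lpInftyPUnit (B := BoundedOpsOnEllTwo)).symm

noncomputable def tProd : (BoundedOpsOnEllTwo × lp (fun _ : ℕ => Wop) ∞) ≃L[ℂ]
    (lp (fun _ : Unit => BoundedOpsOnEllTwo) ∞ × lp (fun _ : ℕ => Wop) ∞) :=
  tPUnitSymm.prodCongr (ContinuousLinearEquiv.refl ℂ (lp (fun _ : ℕ => Wop) ∞))

noncomputable def tSplitSymm : (lp (fun _ : Unit => BoundedOpsOnEllTwo) ∞ × lp (fun _ : ℕ => Wop) ∞)
    ≃L[ℂ] lp (fun _ : Unit ⊕ ℕ => BoundedOpsOnEllTwo) ∞ :=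
  (lpInftySumSplit (ι := Unit) (κ := ℕ) (B := BoundedOpsOnEllTwo)).symm

noncomputable def tCongrUN : lp (fun _ : Unit ⊕ ℕ => BoundedOpsOnEllTwo) ∞ ≃L[ℂ]
    lp (fun _ : ℕ => Wop) ∞ :=
  lpInftyCongr ((Equiv.sumComm Unit ℕ).trans
    ((Equiv.optionEquivSumPUnit ℕ).symm.trans (Denumerable.eqv (Option ℕ))))

noncomputable def eBYdef : (BoundedOpsOnEllTwo × lp (fun _ : ℕ => Wop) ∞) ≃L[ℂ]
    lp (fun _ : ℕ => Wop) ∞ :=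
  tProd.trans (tSplitSymm.trans tCongrUN)

noncomputable def tCongrNN : lp (fun _ : ℕ => Wop) ∞ ≃L[ℂ]
    lp (fun _ : ℕ ⊕ ℕ => BoundedOpsOnEllTwo) ∞ :=
  lpInftyCongr (Denumerable.eqv (ℕ ⊕ ℕ)).symm

noncomputable def tSplitNN : lp (fun _ : ℕ ⊕ ℕ => BoundedOpsOnEllTwo) ∞ ≃L[ℂ]
    (lp (fun _ : ℕ => Wop) ∞ × lp (fun _ : ℕ => Wop) ∞) :=
  lpInftySumSplit

noncomputable def eYYdef : lp (fun _ : ℕ => Wop) ∞ ≃L[ℂ]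
    (lp (fun _ : ℕ => Wop) ∞ × lp (fun _ : ℕ => Wop) ∞) :=
  tCongrNN.trans tSplitNN

end Assembly

section FinalAssembly

/-- Associativity of products as a continuous linear equivalence. -/
def cleProdAssoc (R M1 M2 M3 : Type*) [Semiring R]
    [TopologicalSpace M1] [TopologicalSpace M2] [TopologicalSpace M3]
    [AddCommMonoid M1] [AddCommMonoid M2] [AddCommMonoid M3]
    [Module R M1] [Module R M2] [Module R M3] :
    ((M1 × M2) × M3) ≃L[R] (M1 × (M2 × M3)) where
  toLinearEquiv := LinearEquiv.prodAssoc R M1 M2 M3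
  continuous_toFun := by
    exact ((continuous_fst.comp continuous_fst).prodMk
      ((continuous_snd.comp continuous_fst).prodMk continuous_snd))
  continuous_invFun := by
    exact ((continuous_fst.prodMk (continuous_fst.comp continuous_snd)).prodMk
      (continuous_snd.comp continuous_snd))

noncomputable def Uconj : (Htwo →L[ℂ] Htwo) ≃L[ℂ] BoundedOpsOnEllTwo :=
  ContinuousLinearEquiv.arrowCongr
    (lpTwoCongr (Denumerable.eqv (ℕ × ℕ))).toContinuousLinearEquiv
    (lpTwoCongr (Denumerable.eqv (ℕ × ℕ))).toContinuousLinearEquiv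

noncomputable def Sfin : lp (fun _ : ℕ => Wop) ∞ →L[ℂ] BoundedOpsOnEllTwo :=
  (Uconj : (Htwo →L[ℂ] Htwo) →L[ℂ] BoundedOpsOnEllTwo).comp SZero

noncomputable def Efin : BoundedOpsOnEllTwo →L[ℂ] lp (fun _ : ℕ => Wop) ∞ :=
  EZero.comp (Uconj.symm : BoundedOpsOnEllTwo →L[ℂ] (Htwo →L[ℂ] Htwo))

lemma Efin_Sfin (Tvec : lp (fun _ : ℕ => Wop) ∞) : Efin (Sfin Tvec) = Tvec := by
  show EZero (Uconj.symm (Uconj (SZero Tvec))) = Tvec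
  rw [Uconj.symm_apply_apply, EZero_SZero]

noncomputable def e1fin : BoundedOpsOnEllTwo ≃L[ℂ]
    (lp (fun _ : ℕ => Wop) ∞ × (LinearMap.ker (Efin : BoundedOpsOnEllTwo →ₗ[ℂ] lp (fun _ : ℕ => Wop) ∞))) :=
  retractEquivProdKer Sfin Efin Efin_Sfin

noncomputable def e2fin : (lp (fun _ : ℕ => Wop) ∞ × (LinearMap.ker (Efin : BoundedOpsOnEllTwo →ₗ[ℂ] lp (fun _ : ℕ => Wop) ∞))) ≃L[ℂ]
    ((lp (fun _ : ℕ => Wop) ∞ × lp (fun _ : ℕ => Wop) ∞) × (LinearMap.ker (Efin : BoundedOpsOnEllTwo →ₗ[ℂ] lp (fun _ : ℕ => Wop) ∞))) :=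
  eYYdef.prodCongr (ContinuousLinearEquiv.refl ℂ (LinearMap.ker (Efin : BoundedOpsOnEllTwo →ₗ[ℂ] lp (fun _ : ℕ => Wop) ∞)))

noncomputable def e3fin : ((lp (fun _ : ℕ => Wop) ∞ × lp (fun _ : ℕ => Wop) ∞) × (LinearMap.ker (Efin : BoundedOpsOnEllTwo →ₗ[ℂ] lp (fun _ : ℕ => Wop) ∞))) ≃L[ℂ]
    (lp (fun _ : ℕ => Wop) ∞ × (lp (fun _ : ℕ => Wop) ∞ × (LinearMap.ker (Efin : BoundedOpsOnEllTwo →ₗ[ℂ] lp (fun _ : ℕ => Wop) ∞)))) :=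
  cleProdAssoc ℂ _ _ _

noncomputable def e4fin : (lp (fun _ : ℕ => Wop) ∞ × (lp (fun _ : ℕ => Wop) ∞ × (LinearMap.ker (Efin : BoundedOpsOnEllTwo →ₗ[ℂ] lp (fun _ : ℕ => Wop) ∞)))) ≃L[ℂ]
    (lp (fun _ : ℕ => Wop) ∞ × BoundedOpsOnEllTwo) :=
  (ContinuousLinearEquiv.refl ℂ (lp (fun _ : ℕ => Wop) ∞)).prodCongr e1fin.symm

noncomputable def e5fin : (lp (fun _ : ℕ => Wop) ∞ × BoundedOpsOnEllTwo) ≃L[ℂ]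
    (BoundedOpsOnEllTwo × lp (fun _ : ℕ => Wop) ∞) :=
  ContinuousLinearEquiv.prodComm ℂ _ _

end FinalAssembly

/-- `B(ℓ₂)` is isomorphic, via a continuous linear equivalence, to the Banach
space `ℓ∞(B(ℓ₂))` of bounded `B(ℓ₂)`-valued sequences with the sup norm. -/
theorem boundedOps_equiv_linfty_boundedOps :
    Nonempty (BoundedOpsOnEllTwo ≃L[ℂ] lp (fun _ : ℕ => BoundedOpsOnEllTwo) ∞) :=
  ⟨e1fin.trans (e2fin.trans (e3fin.trans (e4fin.trans (e5fin.trans eBYdef))))⟩
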